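/- With respect to the lattice N = ℤ⁴, let σ ⊆ ℝ⁴ be the cone generated by the four points (1,0,0,0), (0,1,0,0), (0,0,1,0), (−1,−1,−1,2) (i.e., all nonnegative real combinations of these points). Then: (a) σ is almost Gorenstein, witnessed by 𝔪 = (1,1,1,2) ∈ M = Hom(ℤ⁴, ℤ): each of the four generators n satisfies ⟨𝔪, n⟩ = 1, so σ is generated by lattice points on the hyperplane { n : ⟨𝔪, n⟩ = 1 }; but (b) σ is not Gorenstein: there is no 𝔪′ ∈ M such that the monoid σ ∩ ℤ⁴ is generated by lattice points n with ⟨𝔪′, n⟩ = 1. In particular, (0,0,0,1) belongs to σ ∩ ℤ⁴, satisfies ⟨𝔪, (0,0,0,1)⟩ = 2, and is not a sum of elements of σ ∩ ℤ⁴ lying on { n : ⟨𝔪, n⟩ = 1 }. -/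

import Mathlib

open Matrix

/-- The cone of all nonnegative real linear combinations of the elements of a
finite set `G ⊆ ℝ^d`. -/
def coneOf {d : ℕ} (G : Finset (Fin d → ℝ)) : Set (Fin d → ℝ) :=
  { x | ∃ c : (Fin d → ℝ) → ℝ, (∀ v, 0 ≤ c v) ∧ x = ∑ v ∈ G, c v • v }

/-- Coordinatewise embedding of the lattice `ℤ^d` into `ℝ^d`. -/
def intCast {d : ℕ} (n : Fin d → ℤ) : Fin d → ℝ := fun i => (n i : ℝ)

/-- The four generators of the cone of Example 3.2(ii). -/
def gens2 : Finset (Fin 4 → ℤ) :=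
  {![1, 0, 0, 0], ![0, 1, 0, 0], ![0, 0, 1, 0], ![-1, -1, -1, 2]}

/-- The cone `σ = Cone((1,0,0,0), (0,1,0,0), (0,0,1,0), (−1,−1,−1,2)) ⊆ ℝ⁴`. -/
def σ2 : Set (Fin 4 → ℝ) := coneOf (gens2.image intCast)

/-- The almost Gorenstein witness `𝔪 = (1,1,1,2)`. -/
def 𝔪2 : Fin 4 → ℤ := ![1, 1, 1, 2]

lemma intCast_inj {d : ℕ} : Function.Injective (intCast (d := d)) := by
  intro n m h
  funext i
  have := congrFun h i
  simpa [intCast] using this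

lemma sum_gens (c : (Fin 4 → ℝ) → ℝ) :
    ∑ v ∈ gens2.image intCast, c v • v =
      c (intCast ![1,0,0,0]) • intCast ![1,0,0,0] +
      c (intCast ![0,1,0,0]) • intCast ![0,1,0,0] +
      c (intCast ![0,0,1,0]) • intCast ![0,0,1,0] +
      c (intCast ![-1,-1,-1,2]) • intCast ![-1,-1,-1,2] := by
  rw [Finset.sum_image (fun x _ y _ h => intCast_inj h)]
  show ∑ n ∈ ({![1, 0, 0, 0], ![0, 1, 0, 0], ![0, 0, 1, 0], ![-1, -1, -1, 2]} : Finset (Fin 4 → ℤ)),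
      c (intCast n) • intCast n = _
  rw [Finset.sum_insert (by decide), Finset.sum_insert (by decide),
    Finset.sum_insert (by decide), Finset.sum_singleton]
  ring

lemma mem_iff (n : Fin 4 → ℤ) :
    intCast n ∈ σ2 ↔ 0 ≤ n 3 ∧ 0 ≤ 2 * n 0 + n 3 ∧ 0 ≤ 2 * n 1 + n 3 ∧ 0 ≤ 2 * n 2 + n 3 := by
  constructor
  · rintro ⟨c, hc, hx⟩
    rw [sum_gens] at hx
    set a := c (intCast ![1,0,0,0]) with ha
    set b := c (intCast ![0,1,0,0]) with hb
    set e := c (intCast ![0,0,1,0]) with he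
    set t := c (intCast ![-1,-1,-1,2]) with ht
    have h0 := congrFun hx 0
    have h1 := congrFun hx 1
    have h2 := congrFun hx 2
    have h3 := congrFun hx 3
    simp [intCast] at h0 h1 h2 h3
    have ha' := hc (intCast ![1,0,0,0])
    have hb' := hc (intCast ![0,1,0,0])
    have he' := hc (intCast ![0,0,1,0])
    have ht' := hc (intCast ![-1,-1,-1,2])
    rw [← ha] at ha'; rw [← hb] at hb'; rw [← he] at he'; rw [← ht] at ht'
    refine ⟨?_, ?_, ?_, ?_⟩
    · exact_mod_cast (show (0:ℝ) ≤ (n 3 : ℝ) by linarith)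
    · exact_mod_cast (show (0:ℝ) ≤ ((2 * n 0 + n 3 : ℤ) : ℝ) by push_cast; linarith)
    · exact_mod_cast (show (0:ℝ) ≤ ((2 * n 1 + n 3 : ℤ) : ℝ) by push_cast; linarith)
    · exact_mod_cast (show (0:ℝ) ≤ ((2 * n 2 + n 3 : ℤ) : ℝ) by push_cast; linarith)
  · rintro ⟨h3, h0, h1, h2⟩
    refine ⟨fun v =>
      if v = intCast ![1,0,0,0] then (n 0 : ℝ) + (n 3 : ℝ)/2 else
      if v = intCast ![0,1,0,0] then (n 1 : ℝ) + (n 3 : ℝ)/2 else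
      if v = intCast ![0,0,1,0] then (n 2 : ℝ) + (n 3 : ℝ)/2 else
      (n 3 : ℝ)/2, ?_, ?_⟩
    · intro v
      dsimp only
      have c3 : (0:ℝ) ≤ (n 3:ℝ) := by exact_mod_cast h3
      have c0 : (0:ℝ) ≤ 2*(n 0:ℝ) + n 3 := by exact_mod_cast (show (0:ℝ) ≤ ((2*n 0 + n 3 : ℤ):ℝ) by exact_mod_cast h0)
      have c1 : (0:ℝ) ≤ 2*(n 1:ℝ) + n 3 := by exact_mod_cast (show (0:ℝ) ≤ ((2*n 1 + n 3 : ℤ):ℝ) by exact_mod_cast h1)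
      have c2 : (0:ℝ) ≤ 2*(n 2:ℝ) + n 3 := by exact_mod_cast (show (0:ℝ) ≤ ((2*n 2 + n 3 : ℤ):ℝ) by exact_mod_cast h2)
      split_ifs <;> linarith
    · rw [sum_gens]
      have d1 : intCast (d:=4) ![0,1,0,0] ≠ intCast ![1,0,0,0] :=
        fun h => (by decide : (![0,1,0,0] : Fin 4 → ℤ) ≠ ![1,0,0,0]) (intCast_inj h)
      have d2 : intCast (d:=4) ![0,0,1,0] ≠ intCast ![1,0,0,0] :=
        fun h => (by decide : (![0,0,1,0] : Fin 4 → ℤ) ≠ ![1,0,0,0]) (intCast_inj h)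
      have d3 : intCast (d:=4) ![0,0,1,0] ≠ intCast ![0,1,0,0] :=
        fun h => (by decide : (![0,0,1,0] : Fin 4 → ℤ) ≠ ![0,1,0,0]) (intCast_inj h)
      have d4 : intCast (d:=4) ![-1,-1,-1,2] ≠ intCast ![1,0,0,0] :=
        fun h => (by decide : (![-1,-1,-1,2] : Fin 4 → ℤ) ≠ ![1,0,0,0]) (intCast_inj h)
      have d5 : intCast (d:=4) ![-1,-1,-1,2] ≠ intCast ![0,1,0,0] :=
        fun h => (by decide : (![-1,-1,-1,2] : Fin 4 → ℤ) ≠ ![0,1,0,0]) (intCast_inj h)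
      have d6 : intCast (d:=4) ![-1,-1,-1,2] ≠ intCast ![0,0,1,0] :=
        fun h => (by decide : (![-1,-1,-1,2] : Fin 4 → ℤ) ≠ ![0,0,1,0]) (intCast_inj h)
      simp only [if_pos rfl, if_neg d1, if_neg d2, if_neg d3, if_neg d4, if_neg d5, if_neg d6]
      funext i
      fin_cases i <;> simp [intCast]

lemma dot_expand (m n : Fin 4 → ℤ) :
    m ⬝ᵥ n = m 0 * n 0 + m 1 * n 1 + m 2 * n 2 + m 3 * n 3 := by
  simp [dotProduct, Fin.sum_univ_four]

lemma list_le_sum (l : List ℤ) (h : ∀ x ∈ l, 0 ≤ x) : ∀ x ∈ l, x ≤ l.sum := by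
  induction l with
  | nil => simp
  | cons a t ih =>
    intro x hx
    have ht : ∀ x ∈ t, 0 ≤ x := fun x hx => h x (List.mem_cons_of_mem a hx)
    have hts : 0 ≤ t.sum := List.sum_nonneg ht
    rcases List.mem_cons.1 hx with rfl | hx
    · simpa using hts
    · have := ih ht x hx
      have := h a List.mem_cons_self
      simp only [List.sum_cons]; omega

/-- Example 3.2(ii): the cone `σ` generated by `(1,0,0,0), (0,1,0,0), (0,0,1,0),
(−1,−1,−1,2)` in `ℤ⁴` is almost Gorenstein with witness `𝔪 = (1,1,1,2)` (every generator
pairs to `1` with `𝔪`), but is not Gorenstein: no `𝔪′ ∈ M` admits a finite set of lattice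
points of `σ` on the hyperplane `⟨𝔪′, ·⟩ = 1` generating the monoid `σ ∩ ℤ⁴`.  In
particular `(0,0,0,1) ∈ σ ∩ ℤ⁴` pairs to `2` with `𝔪` and is not a sum of lattice points
of `σ` lying on `⟨𝔪, ·⟩ = 1`. -/
theorem stmt_2 :
    (∀ g ∈ gens2, 𝔪2 ⬝ᵥ g = 1) ∧
    (¬ ∃ (𝔪' : Fin 4 → ℤ) (S : Finset (Fin 4 → ℤ)),
        (∀ s ∈ S, intCast s ∈ σ2 ∧ 𝔪' ⬝ᵥ s = 1) ∧
        ((AddSubmonoid.closure (S : Set (Fin 4 → ℤ)) : AddSubmonoid (Fin 4 → ℤ)) :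
            Set (Fin 4 → ℤ)) = { n : Fin 4 → ℤ | intCast n ∈ σ2 }) ∧
    intCast ![0, 0, 0, 1] ∈ σ2 ∧
    𝔪2 ⬝ᵥ ![0, 0, 0, 1] = 2 ∧
    ![0, 0, 0, 1] ∉
      AddSubmonoid.closure { n : Fin 4 → ℤ | intCast n ∈ σ2 ∧ 𝔪2 ⬝ᵥ n = 1 } := by
  refine ⟨by decide, ?_, (mem_iff ![0, 0, 0, 1]).2 (by decide), by decide, ?_⟩
  · rintro ⟨𝔪', S, hS, hclosure⟩
    have de1 : 𝔪' ⬝ᵥ ![1,0,0,0] = 𝔪' 0 := by simp [dotProduct, Fin.sum_univ_four]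
    have de2 : 𝔪' ⬝ᵥ ![0,1,0,0] = 𝔪' 1 := by simp [dotProduct, Fin.sum_univ_four]
    have de3 : 𝔪' ⬝ᵥ ![0,0,1,0] = 𝔪' 2 := by simp [dotProduct, Fin.sum_univ_four]
    have de4 : 𝔪' ⬝ᵥ ![-1,-1,-1,2] = -𝔪' 0 - 𝔪' 1 - 𝔪' 2 + 2*𝔪' 3 := by
      simp [dotProduct, Fin.sum_univ_four]; ring
    have hmem : ∀ n : Fin 4 → ℤ, intCast n ∈ σ2 →
        n ∈ AddSubmonoid.closure (S : Set (Fin 4 → ℤ)) := by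
      intro n hn
      exact (Set.ext_iff.1 hclosure n).2 hn
    have hpos : ∀ n, n ∈ AddSubmonoid.closure (S : Set (Fin 4 → ℤ)) →
        n = 0 ∨ 1 ≤ 𝔪' ⬝ᵥ n := by
      intro n hn
      refine AddSubmonoid.closure_induction (motive := fun n _ => n = 0 ∨ 1 ≤ 𝔪' ⬝ᵥ n)
        ?_ (Or.inl rfl) ?_ hn
      · intro s hs; exact Or.inr (le_of_eq (hS s hs).2.symm)
      · intro x y hx hy px py
        rcases px with rfl | px
        · simpa using py
        · rcases py with rfl | py
          · simpa using Or.inr px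
          · right; rw [dotProduct_add]; omega
    have h1 : 1 ≤ 𝔪' 0 := by
      rcases hpos _ (hmem ![1,0,0,0] ((mem_iff ![1,0,0,0]).2 (by decide))) with h | h
      · exact absurd h (by decide)
      · rwa [de1] at h
    have h2 : 1 ≤ 𝔪' 1 := by
      rcases hpos _ (hmem ![0,1,0,0] ((mem_iff ![0,1,0,0]).2 (by decide))) with h | h
      · exact absurd h (by decide)
      · rwa [de2] at h
    have h3 : 1 ≤ 𝔪' 2 := by
      rcases hpos _ (hmem ![0,0,1,0] ((mem_iff ![0,0,1,0]).2 (by decide))) with h | h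
      · exact absurd h (by decide)
      · rwa [de3] at h
    have h4 : 1 ≤ -𝔪' 0 - 𝔪' 1 - 𝔪' 2 + 2*𝔪' 3 := by
      rcases hpos _ (hmem ![-1,-1,-1,2] ((mem_iff ![-1,-1,-1,2]).2 (by decide))) with h | h
      · exact absurd h (by decide)
      · rwa [de4] at h
    -- now analyse (0,0,0,1)
    have hu : (![0, 0, 0, 1] : Fin 4 → ℤ) ∈ AddSubmonoid.closure (S : Set (Fin 4 → ℤ)) :=
      hmem ![0, 0, 0, 1] ((mem_iff ![0, 0, 0, 1]).2 (by decide))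
    obtain ⟨l, hl, hsum⟩ := AddSubmonoid.exists_list_of_mem_closure hu
    have hcoord : ∀ i : Fin 4, (l.map (fun y => y i)).sum = (![0, 0, 0, 1] : Fin 4 → ℤ) i := by
      intro i
      have := map_list_sum (Pi.evalAddMonoidHom (fun _ : Fin 4 => ℤ) i) l
      rw [hsum] at this
      exact this.symm
    have hσ : ∀ y ∈ l, 0 ≤ y 3 ∧ 0 ≤ 2 * y 0 + y 3 ∧ 0 ≤ 2 * y 1 + y 3 ∧ 0 ≤ 2 * y 2 + y 3 :=
      fun y hy => (mem_iff y).1 (hS y (hl y hy)).1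
    have hy3le : ∀ y ∈ l, y 3 ≤ 1 := by
      intro y hy
      have := list_le_sum (l.map (fun y => y 3))
        (fun x hx => by obtain ⟨z, hz, rfl⟩ := List.mem_map.1 hx; exact (hσ z hz).1)
        (y 3) (List.mem_map.2 ⟨y, hy, rfl⟩)
      rw [hcoord 3] at this
      simpa using this
    have hynn : ∀ y ∈ l, 0 ≤ y 0 ∧ 0 ≤ y 1 ∧ 0 ≤ y 2 ∧ 0 ≤ y 3 := by
      intro y hy
      obtain ⟨a, b, c, d⟩ := hσ y hy
      have := hy3le y hy
      omega
    have hyz0 : ∀ y ∈ l, y 0 = 0 := by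
      intro y hy
      have hub := list_le_sum (l.map (fun z => z 0))
        (fun x hx => by obtain ⟨z, hz, rfl⟩ := List.mem_map.1 hx; exact (hynn z hz).1)
        (y 0) (List.mem_map.2 ⟨y, hy, rfl⟩)
      rw [hcoord 0] at hub
      have := (hynn y hy).1
      simp only [Matrix.cons_val_zero] at hub
      omega
    have hyz1 : ∀ y ∈ l, y 1 = 0 := by
      intro y hy
      have hub := list_le_sum (l.map (fun z => z 1))
        (fun x hx => by obtain ⟨z, hz, rfl⟩ := List.mem_map.1 hx; exact (hynn z hz).2.1)
        (y 1) (List.mem_map.2 ⟨y, hy, rfl⟩)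
      rw [hcoord 1] at hub
      have := (hynn y hy).2.1
      simp only [Matrix.cons_val_one, Matrix.head_cons, Matrix.cons_val_zero] at hub
      omega
    have hyz2 : ∀ y ∈ l, y 2 = 0 := by
      intro y hy
      have hub := list_le_sum (l.map (fun z => z 2))
        (fun x hx => by obtain ⟨z, hz, rfl⟩ := List.mem_map.1 hx; exact (hynn z hz).2.2.1)
        (y 2) (List.mem_map.2 ⟨y, hy, rfl⟩)
      rw [hcoord 2] at hub
      have := (hynn y hy).2.2.1
      have h2eq : (![0, 0, 0, 1] : Fin 4 → ℤ) 2 = 0 := by decide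
      rw [h2eq] at hub
      omega
    have hne : l ≠ [] := by
      rintro rfl
      have := congrFun hsum 3
      simp at this
    obtain ⟨y, hy⟩ := List.exists_mem_of_ne_nil l hne
    have hdot := (hS y (hl y hy)).2
    rw [dot_expand, hyz0 y hy, hyz1 y hy, hyz2 y hy] at hdot
    have hy3 := hy3le y hy
    have hy3' := (hynn y hy).2.2.2
    have hm3 : 𝔪' 3 = 1 := by
      rcases (by omega : y 3 = 0 ∨ y 3 = 1) with h | h
      · rw [h] at hdot; simp at hdot
      · rw [h] at hdot; simpa using hdot
    omega
  · intro h
    have key : (![0, 0, 0, 1] : Fin 4 → ℤ) 3 % 2 = 0 := by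
      refine AddSubmonoid.closure_induction (motive := fun n _ => n 3 % 2 = 0)
        ?_ (by simp) ?_ h
      · rintro n ⟨hσ, hm⟩
        obtain ⟨a, b, c, d⟩ := (mem_iff n).1 hσ
        have : n 0 + n 1 + n 2 + 2 * n 3 = 1 := by
          rw [show (𝔪2 : Fin 4 → ℤ) ⬝ᵥ n = n 0 + n 1 + n 2 + 2 * n 3 from by
            simp [𝔪2, dotProduct, Fin.sum_univ_four]] at hm
          exact hm
        omega
      · intro x y _ _ px py
        simp only [Pi.add_apply]
        omega
    simp at key
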